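/- Define h_A(θ) = E[Xθ^X 1_{A^c}(X)]E[θ^X 1_A(X)] + θE[Xθ^X 1_A(X)] − E[θ^X 1_{A^c}(X)]E[Xθ^X 1_A(X)] − θE[X]E[θ^X 1_A(X)]. Then h_A(1) = 0 and h_A'(1) = p(A)·E[X(X−1)] + (1−E[X])·E[X 1_A(X)]. In particular, if E[X] ≤ 1 and p satisfies p(0)>0, p(0)+p(1)<1, then h_A'(1) > 0. -/

import Mathlib

open scoped Classical

section Aux

/-- Summability of `k^j * |c k| * r'^k` for `r' < r` given summability of `|c k| * r^k`. -/
lemma summable_pow_mul_aux (c : ℕ → ℝ) (r : ℝ) (hr : 1 < r)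
    (hc : Summable fun k => |c k| * r ^ k) (j : ℕ) (r' : ℝ) (hr'0 : 0 < r') (hr'r : r' < r) :
    Summable fun k : ℕ => (k : ℝ) ^ j * |c k| * r' ^ k := by
  have hr0 : (0:ℝ) < r := lt_trans one_pos hr
  set M := ∑' k, |c k| * r ^ k with hM
  have hMk : ∀ k, |c k| * r ^ k ≤ M := fun k =>
    hc.le_tsum k (fun j _ => by positivity)
  have hratio : ‖r'/r‖ < 1 := by
    rw [Real.norm_eq_abs, abs_of_pos (by positivity)]
    rw [div_lt_one hr0]; exact hr'r
  have hgeom : Summable fun k : ℕ => (k : ℝ) ^ j * (r'/r) ^ k :=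
    summable_pow_mul_geometric_of_norm_lt_one j hratio
  refine Summable.of_nonneg_of_le (fun k => by positivity) (fun k => ?_) (hgeom.mul_left M)
  have h1 : r' ^ k = (r'/r)^k * r^k := by
    rw [div_pow, div_mul_cancel₀]; positivity
  calc (k:ℝ)^j * |c k| * r'^k = ((k:ℝ)^j * (r'/r)^k) * (|c k| * r^k) := by rw [h1]; ring
    _ ≤ ((k:ℝ)^j * (r'/r)^k) * M := by
        apply mul_le_mul_of_nonneg_left (hMk k) (by positivity)
    _ = M * ((k:ℝ)^j * (r'/r)^k) := by ring

lemma summable_of_rad (c : ℕ → ℝ) (r : ℝ) (hr : 1 < r)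
    (hc : Summable fun k => |c k| * r ^ k) : Summable c := by
  apply Summable.of_abs
  apply Summable.of_nonneg_of_le (fun k => abs_nonneg _) _ hc
  intro k
  nlinarith [abs_nonneg (c k), one_le_pow₀ (le_of_lt hr) (n := k)]

lemma summable_mul_of_rad (c : ℕ → ℝ) (r : ℝ) (hr : 1 < r)
    (hc : Summable fun k => |c k| * r ^ k) : Summable fun k : ℕ => (k : ℝ) * c k := by
  apply Summable.of_abs
  have h := summable_pow_mul_aux c r hr hc 1 1 one_pos hr
  simp only [pow_one, one_pow, mul_one] at h
  apply Summable.of_nonneg_of_le (fun k => abs_nonneg _) _ h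
  intro k
  rw [abs_mul, Nat.abs_cast]

/-- Key lemma: derivative of the power series at 1. -/
lemma hasDerivAt_tsum_pow (c : ℕ → ℝ) (r : ℝ) (hr : 1 < r)
    (hc : Summable fun k => |c k| * r ^ k) :
    HasDerivAt (fun θ : ℝ => ∑' k : ℕ, c k * θ ^ k) (∑' k : ℕ, (k : ℝ) * c k) 1 := by
  set r' := (1 + r) / 2 with hr'def
  have hr'1 : 1 < r' := by rw [hr'def]; linarith
  have hr'r : r' < r := by rw [hr'def]; linarith
  have hr'0 : (0:ℝ) < r' := by linarith
  have hu : Summable fun k : ℕ => (k:ℝ)^1 * |c k| * r'^k :=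
    summable_pow_mul_aux c r hr hc 1 r' hr'0 hr'r
  have key := hasDerivAt_tsum_of_isPreconnected hu (isOpen_Ioo (a := -r') (b := r'))
      ((convex_Ioo (-r') r').isPreconnected)
      (g := fun n θ => c n * θ ^ n)
      (g' := fun n θ => c n * ((n:ℝ) * θ ^ (n-1)))
      (fun n θ _ => (hasDerivAt_pow n θ).const_mul (c n))
      ?_ (y₀ := 0) ?_ ?_ (y := 1) ?_
  · have hval : (∑' n : ℕ, c n * ((n:ℝ) * (1:ℝ) ^ (n-1))) = ∑' n : ℕ, (n:ℝ) * c n :=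
      tsum_congr fun n => by rw [one_pow]; ring
    rw [hval] at key; exact key
  · intro n θ hθ
    have hθr : |θ| ≤ r' := by
      rw [abs_le]; exact ⟨le_of_lt hθ.1, le_of_lt hθ.2⟩
    have h2 : |θ| ^ (n-1) ≤ r' ^ n :=
      le_trans (pow_le_pow_left₀ (abs_nonneg _) hθr _)
        (pow_le_pow_right₀ (le_of_lt hr'1) (Nat.sub_le n 1))
    calc ‖c n * ((n:ℝ) * θ ^ (n-1))‖ = |c n| * ((n:ℝ) * |θ| ^ (n-1)) := by
          rw [Real.norm_eq_abs, abs_mul, abs_mul, abs_pow, Nat.abs_cast]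
      _ ≤ |c n| * ((n:ℝ) * r' ^ n) := by
          apply mul_le_mul_of_nonneg_left _ (abs_nonneg _)
          exact mul_le_mul_of_nonneg_left h2 (Nat.cast_nonneg n)
      _ = (n:ℝ)^1 * |c n| * r'^n := by ring
  · exact Set.mem_Ioo.mpr ⟨by linarith, by linarith⟩
  · apply summable_of_ne_finset_zero (s := ({0} : Finset ℕ))
    intro n hn
    simp only [Finset.mem_singleton] at hn
    show c n * (0:ℝ) ^ n = 0
    rw [zero_pow hn, mul_zero]
  · exact Set.mem_Ioo.mpr ⟨by linarith, hr'1⟩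

lemma ind_eq1 (B : Set ℕ) (p : ℕ → ℝ) (θ : ℝ) (k : ℕ) :
    B.indicator (fun k : ℕ => (k : ℝ) * θ ^ k * p k) k
      = B.indicator (fun k : ℕ => (k : ℝ) * p k) k * θ ^ k := by
  by_cases h : k ∈ B <;> simp [h] <;> ring

lemma ind_eq2 (B : Set ℕ) (p : ℕ → ℝ) (θ : ℝ) (k : ℕ) :
    B.indicator (fun k => θ ^ k * p k) k = B.indicator p k * θ ^ k := by
  by_cases h : k ∈ B <;> simp [h] <;> ring

lemma ind_mul_k (B : Set ℕ) (g : ℕ → ℝ) (k : ℕ) :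
    (k : ℝ) * B.indicator g k = B.indicator (fun k : ℕ => (k : ℝ) * g k) k := by
  by_cases h : k ∈ B <;> simp [h]

end Aux

/-- The function `h_A(θ)` of the paper. -/
noncomputable def hA (p : ℕ → ℝ) (A : Set ℕ) (θ : ℝ) : ℝ :=
  (∑' k : ℕ, (Aᶜ).indicator (fun k => (k : ℝ) * θ ^ k * p k) k)
      * (∑' k : ℕ, A.indicator (fun k => θ ^ k * p k) k)
    + θ * (∑' k : ℕ, A.indicator (fun k => (k : ℝ) * θ ^ k * p k) k)
    - (∑' k : ℕ, (Aᶜ).indicator (fun k => θ ^ k * p k) k)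
      * (∑' k : ℕ, A.indicator (fun k => (k : ℝ) * θ ^ k * p k) k)
    - θ * (∑' k : ℕ, (k : ℝ) * p k) * (∑' k : ℕ, A.indicator (fun k => θ ^ k * p k) k)

set_option maxHeartbeats 1600000 in
theorem stmt3 (p : ℕ → ℝ) (A : Set ℕ)
    (hp : ∀ k, 0 ≤ p k) (hpsum : ∑' k, p k = 1)
    (hp0 : 0 < p 0) (hp01 : p 0 + p 1 < 1)
    (hApos : 0 < ∑' k : ℕ, A.indicator p k)
    -- the generating function of `p` has radius of convergence `> 1`
    (hrad : ∃ r : ℝ, 1 < r ∧ Summable (fun k : ℕ => p k * r ^ k)) :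
    hA p A 1 = 0
    ∧ HasDerivAt (hA p A)
        ((∑' k : ℕ, A.indicator p k) * (∑' k : ℕ, (k : ℝ) * ((k : ℝ) - 1) * p k)
          + (1 - ∑' k : ℕ, (k : ℝ) * p k) * (∑' k : ℕ, A.indicator (fun k => (k : ℝ) * p k) k)) 1
    ∧ ((∑' k : ℕ, (k : ℝ) * p k) ≤ 1 →
        0 < (∑' k : ℕ, A.indicator p k) * (∑' k : ℕ, (k : ℝ) * ((k : ℝ) - 1) * p k)
          + (1 - ∑' k : ℕ, (k : ℝ) * p k) * (∑' k : ℕ, A.indicator (fun k => (k : ℝ) * p k) k)) := by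
  obtain ⟨r, hr1, hrsum⟩ := hrad
  have hr0 : (0:ℝ) < r := lt_trans one_pos hr1
  -- shrink radius
  set r₀ := (1 + r) / 2 with hr₀def
  have hr₀1 : 1 < r₀ := by rw [hr₀def]; linarith
  have hr₀r : r₀ < r := by rw [hr₀def]; linarith
  have hr₀0 : (0:ℝ) < r₀ := by linarith
  have habs : (fun k : ℕ => |p k| * r ^ k) = fun k => p k * r ^ k := by
    funext k; rw [abs_of_nonneg (hp k)]
  have hprad : Summable fun k : ℕ => |p k| * r ^ k := by rw [habs]; exact hrsum
  -- summability of k^j p k r₀^k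
  have Hj : ∀ j : ℕ, Summable fun k : ℕ => (k:ℝ)^j * p k * r₀ ^ k := by
    intro j
    have := summable_pow_mul_aux p r hr1 hprad j r₀ hr₀0 hr₀r
    simpa only [abs_of_nonneg, habs, fun k => abs_of_nonneg (hp k)] using this
  -- the four coefficient sequences
  set c₁ : ℕ → ℝ := (Aᶜ).indicator (fun k : ℕ => (k:ℝ) * p k) with hc₁def
  set c₂ : ℕ → ℝ := A.indicator p with hc₂def
  set c₃ : ℕ → ℝ := A.indicator (fun k : ℕ => (k:ℝ) * p k) with hc₃def
  set c₄ : ℕ → ℝ := (Aᶜ).indicator p with hc₄def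
  have hcbound0 : ∀ (B : Set ℕ), ∀ k, |B.indicator p k| ≤ p k := by
    intro B k; by_cases h : k ∈ B <;> simp [h, abs_of_nonneg (hp k), hp k]
  have hcbound1 : ∀ (B : Set ℕ), ∀ k, |B.indicator (fun k : ℕ => (k:ℝ) * p k) k| ≤ (k:ℝ) * p k := by
    intro B k
    by_cases h : k ∈ B <;>
      simp [h, abs_of_nonneg (mul_nonneg (Nat.cast_nonneg k) (hp k)),
        mul_nonneg (Nat.cast_nonneg k) (hp k)]
  have hrad0 : ∀ (B : Set ℕ), Summable fun k => |B.indicator p k| * r₀ ^ k := by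
    intro B
    apply Summable.of_nonneg_of_le (fun k => by positivity) _
      (by simpa using Hj 0)
    intro k
    exact mul_le_mul_of_nonneg_right (hcbound0 B k) (by positivity)
  have hrad1 : ∀ (B : Set ℕ),
      Summable fun k => |B.indicator (fun k : ℕ => (k:ℝ) * p k) k| * r₀ ^ k := by
    intro B
    apply Summable.of_nonneg_of_le (fun k => by positivity) _
      (by simpa [pow_one] using Hj 1)
    intro k
    exact mul_le_mul_of_nonneg_right (hcbound1 B k) (by positivity)
  -- derivatives of the four series
  have d1 := hasDerivAt_tsum_pow c₁ r₀ hr₀1 (hrad1 Aᶜ)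
  have d2 := hasDerivAt_tsum_pow c₂ r₀ hr₀1 (hrad0 A)
  have d3 := hasDerivAt_tsum_pow c₃ r₀ hr₀1 (hrad1 A)
  have d4 := hasDerivAt_tsum_pow c₄ r₀ hr₀1 (hrad0 Aᶜ)
  -- rewrite hA
  have hAeq : hA p A = fun θ =>
      (∑' k, c₁ k * θ ^ k) * (∑' k, c₂ k * θ ^ k)
        + θ * (∑' k, c₃ k * θ ^ k)
        - (∑' k, c₄ k * θ ^ k) * (∑' k, c₃ k * θ ^ k)
        - θ * (∑' k : ℕ, (k : ℝ) * p k) * (∑' k, c₂ k * θ ^ k) := by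
    funext θ
    unfold hA
    rw [tsum_congr (ind_eq1 Aᶜ p θ), tsum_congr (ind_eq2 A p θ),
      tsum_congr (ind_eq1 A p θ), tsum_congr (ind_eq2 Aᶜ p θ)]
  -- names for values
  set m := ∑' k : ℕ, (k:ℝ) * p k with hmdef
  set a := ∑' k, c₂ k with hadef
  set a' := ∑' k, c₄ k with ha'def
  set b := ∑' k, c₃ k with hbdef
  set b' := ∑' k, c₁ k with hb'def
  set q := ∑' k : ℕ, (k:ℝ) * c₃ k with hqdef
  set q' := ∑' k : ℕ, (k:ℝ) * c₁ k with hq'def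
  -- values at 1
  have v1 : (∑' k, c₁ k * (1:ℝ) ^ k) = b' := by
    rw [hb'def]; exact tsum_congr fun k => by rw [one_pow, mul_one]
  have v2 : (∑' k, c₂ k * (1:ℝ) ^ k) = a := by
    rw [hadef]; exact tsum_congr fun k => by rw [one_pow, mul_one]
  have v3 : (∑' k, c₃ k * (1:ℝ) ^ k) = b := by
    rw [hbdef]; exact tsum_congr fun k => by rw [one_pow, mul_one]
  have v4 : (∑' k, c₄ k * (1:ℝ) ^ k) = a' := by
    rw [ha'def]; exact tsum_congr fun k => by rw [one_pow, mul_one]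
  -- derivative sums identities
  have w2 : (∑' k : ℕ, (k:ℝ) * c₂ k) = b := by
    rw [hbdef, hc₂def, hc₃def]; exact tsum_congr fun k => ind_mul_k A p k
  have w4 : (∑' k : ℕ, (k:ℝ) * c₄ k) = b' := by
    rw [hb'def, hc₄def, hc₁def]; exact tsum_congr fun k => ind_mul_k Aᶜ p k
  -- summabilities
  have S2 : Summable c₂ := summable_of_rad c₂ r₀ hr₀1 (hrad0 A)
  have S4 : Summable c₄ := summable_of_rad c₄ r₀ hr₀1 (hrad0 Aᶜ)
  have S3 : Summable c₃ := summable_of_rad c₃ r₀ hr₀1 (hrad1 A)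
  have S1 : Summable c₁ := summable_of_rad c₁ r₀ hr₀1 (hrad1 Aᶜ)
  have Sk3 : Summable fun k : ℕ => (k:ℝ) * c₃ k := summable_mul_of_rad c₃ r₀ hr₀1 (hrad1 A)
  have Sk1 : Summable fun k : ℕ => (k:ℝ) * c₁ k := summable_mul_of_rad c₁ r₀ hr₀1 (hrad1 Aᶜ)
  have Skp : Summable fun k : ℕ => (k:ℝ) * p k := by
    have := summable_mul_of_rad p r₀ hr₀1 (by
      have := Hj 0; simp only [pow_zero, one_mul] at this
      apply Summable.of_nonneg_of_le (fun k => by positivity) _ this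
      intro k; rw [abs_of_nonneg (hp k)])
    exact this
  have Sk2p : Summable fun k : ℕ => (k:ℝ) * ((k:ℝ) * p k) := by
    have h2 := Hj 2
    apply Summable.of_nonneg_of_le
      (fun k => mul_nonneg (Nat.cast_nonneg k) (mul_nonneg (Nat.cast_nonneg k) (hp k))) _ h2
    intro k
    have : (k:ℝ) * ((k:ℝ) * p k) = (k:ℝ)^2 * p k := by ring
    rw [this]
    nlinarith [one_le_pow₀ (le_of_lt hr₀1) (n := k), mul_nonneg (mul_nonneg (sq_nonneg (k:ℝ)) (hp k)) (sub_nonneg.mpr (one_le_pow₀ (le_of_lt hr₀1) (n := k))), sq_nonneg (k:ℝ), hp k]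
  -- splitting identities
  have split0 : a + a' = 1 := by
    rw [hadef, ha'def, ← S2.tsum_add S4, ← hpsum]
    exact tsum_congr fun k => by
      by_cases h : k ∈ A <;> simp [hc₂def, hc₄def, Set.indicator, h]
  have split1 : b + b' = m := by
    rw [hbdef, hb'def, ← S3.tsum_add S1, hmdef]
    exact tsum_congr fun k => by
      by_cases h : k ∈ A <;> simp [hc₃def, hc₁def, Set.indicator, h]
  have split2 : q + q' = ∑' k : ℕ, (k:ℝ) * ((k:ℝ) * p k) := by
    rw [hqdef, hq'def, ← Sk3.tsum_add Sk1]
    exact tsum_congr fun k => by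
      by_cases h : k ∈ A <;> simp [hc₃def, hc₁def, Set.indicator, h] <;> ring
  have split3 : (∑' k : ℕ, (k:ℝ) * ((k:ℝ) - 1) * p k) = (∑' k : ℕ, (k:ℝ) * ((k:ℝ) * p k)) - m := by
    rw [hmdef, ← Sk2p.tsum_sub Skp]
    exact tsum_congr fun k => by ring
  -- Part 1 : hA p A 1 = 0
  have part1 : hA p A 1 = 0 := by
    rw [hAeq]
    beta_reduce
    rw [v1, v2, v3, v4]
    linear_combination a * split1 - b * split0
  -- Part 2 : derivative
  have part2 : HasDerivAt (hA p A)
      ((∑' k : ℕ, A.indicator p k) * (∑' k : ℕ, (k : ℝ) * ((k : ℝ) - 1) * p k)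
        + (1 - m) * (∑' k : ℕ, A.indicator (fun k : ℕ => (k : ℝ) * p k) k)) 1 := by
    rw [hAeq]
    have dθ : HasDerivAt (fun θ : ℝ => θ) 1 1 := hasDerivAt_id 1
    have D := (((d1.mul d2).add (dθ.mul d3)).sub (d4.mul d3)).sub ((dθ.mul_const m).mul d2)
    refine D.congr_deriv ?_
    rw [v1, v2, v3, v4, w2, w4]
    have hgoal1 : (∑' k : ℕ, A.indicator p k) = a := by rw [hadef, hc₂def]
    have hgoal2 : (∑' k : ℕ, A.indicator (fun k : ℕ => (k : ℝ) * p k) k) = b := by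
      rw [hbdef, hc₃def]
    rw [hgoal1, hgoal2, split3, ← split2]
    have ha' : a' = 1 - a := by linarith [split0]
    rw [ha']
    ring
  refine ⟨part1, part2, ?_⟩
  -- Part 3
  intro hm
  have hapos : 0 < a := hApos
  have hbnn : 0 ≤ b := by
    rw [hbdef, hc₃def]
    apply tsum_nonneg
    intro k
    exact Set.indicator_nonneg (fun k _ => mul_nonneg (Nat.cast_nonneg k) (hp k)) k
  have hbnn2 : True := trivial
  clear hbnn2
  have hTsummable : Summable fun k : ℕ => (k:ℝ) * ((k:ℝ) - 1) * p k := by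
    apply (Sk2p.sub Skp).congr
    intro k; ring
  have hTnn : ∀ k : ℕ, 0 ≤ (k:ℝ) * ((k:ℝ) - 1) * p k := by
    intro k
    apply mul_nonneg _ (hp k)
    rcases Nat.eq_zero_or_pos k with h | h
    · simp [h]
    · have : (1:ℝ) ≤ (k:ℝ) := by exact_mod_cast h
      nlinarith
  have hk2 : ∃ k, 2 ≤ k ∧ 0 < p k := by
    by_contra h
    push_neg at h
    have hz : ∀ k ∉ ({0, 1} : Finset ℕ), p k = 0 := by
      intro k hk
      simp only [Finset.mem_insert, Finset.mem_singleton] at hk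
      push_neg at hk
      have h2 : 2 ≤ k := by omega
      have := h k h2
      linarith [hp k]
    have : (∑' k, p k) = p 0 + p 1 := by
      rw [tsum_eq_sum hz]; simp
    rw [hpsum] at this
    linarith
  obtain ⟨k₀, hk₀2, hk₀p⟩ := hk2
  have hTpos : 0 < ∑' k : ℕ, (k:ℝ) * ((k:ℝ) - 1) * p k := by
    apply hTsummable.tsum_pos hTnn k₀
    have h1 : (2:ℝ) ≤ (k₀:ℝ) := by exact_mod_cast hk₀2
    have h2 : 0 < (k₀:ℝ) * ((k₀:ℝ) - 1) := by nlinarith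
    exact mul_pos h2 hk₀p
  have h1m : 0 ≤ 1 - m := by linarith
  exact add_pos_of_pos_of_nonneg (mul_pos hapos hTpos) (mul_nonneg h1m hbnn)
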